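/- Let m ≥ 3 and let A ≥ 0, B be integers with 14A + 7B - B² ≥ 0 and such that 14A + 7B - B² ≠ 4^l(8k+7) for all nonnegative integers l, k. Then there exist integers x₁, x₂, x₃, x₄ with P_m(x₁) + P_m(x₂) + P_m(x₃) + 4P_m(x₄) = A(m-2) + B. -/

import Mathlib

namespace Rep1114

/-- Binary quadratic form `a x² + 2 b x y + d y²`. -/
structure Bin where
  a : ℤ
  b : ℤ
  d : ℤ

namespace Bin

def Q (G : Bin) (x y : ℤ) : ℤ := G.a * x ^ 2 + 2 * G.b * x * y + G.d * y ^ 2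

def det (G : Bin) : ℤ := G.a * G.d - G.b ^ 2

def PD (G : Bin) : Prop := ∀ x y : ℤ, ¬(x = 0 ∧ y = 0) → 0 < G.Q x y

/-- Substitution by the matrix with columns `(p₁,p₂)`, `(q₁,q₂)`. -/
def sub (G : Bin) (p₁ p₂ q₁ q₂ : ℤ) : Bin :=
  ⟨G.Q p₁ p₂, G.a * p₁ * q₁ + G.b * (p₁ * q₂ + p₂ * q₁) + G.d * p₂ * q₂, G.Q q₁ q₂⟩

theorem Q_sub (G : Bin) (p₁ p₂ q₁ q₂ x y : ℤ) :
    (G.sub p₁ p₂ q₁ q₂).Q x y = G.Q (p₁ * x + q₁ * y) (p₂ * x + q₂ * y) := by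
  simp only [sub, Q]; ring

theorem det_sub (G : Bin) (p₁ p₂ q₁ q₂ : ℤ) :
    (G.sub p₁ p₂ q₁ q₂).det = (p₁ * q₂ - p₂ * q₁) ^ 2 * G.det := by
  simp only [sub, det, Q]; ring

theorem key (G : Bin) (x y : ℤ) :
    G.a * G.Q x y = (G.a * x + G.b * y) ^ 2 + G.det * y ^ 2 := by
  simp only [Q, det]; ring

theorem pd_a {G : Bin} (h : G.PD) : 1 ≤ G.a := by
  have := h 1 0 (by simp)
  simp only [Q] at this; omega

theorem pd_det {G : Bin} (h : G.PD) : 1 ≤ G.det := by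
  have ha := pd_a h
  have h2 := h (-G.b) G.a (by intro ⟨h1, h2⟩; omega)
  have hk := G.key (-G.b) G.a
  have : G.a * (-G.b) + G.b * G.a = 0 := by ring
  nlinarith [h2, hk]

theorem pd_of {G : Bin} (ha : 1 ≤ G.a) (hd : 1 ≤ G.det) : G.PD := by
  intro x y hxy
  have hk := G.key x y
  rcases lt_trichotomy (G.Q x y) 0 with h | h | h
  · nlinarith [sq_nonneg (G.a * x + G.b * y), sq_nonneg y]
  · exfalso
    have hy : y = 0 := by nlinarith [sq_nonneg (G.a * x + G.b * y), sq_nonneg y]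
    subst hy
    have : G.a * x + G.b * 0 = 0 := by nlinarith [sq_nonneg (G.a * x + G.b * 0)]
    have : x = 0 := by nlinarith
    exact hxy ⟨this, rfl⟩
  · exact h

theorem pd_sub {G : Bin} (h : G.PD) (p₁ p₂ q₁ q₂ : ℤ) (hdet : p₁ * q₂ - p₂ * q₁ ≠ 0) :
    (G.sub p₁ p₂ q₁ q₂).PD := by
  intro x y hxy
  rw [Q_sub]
  apply h
  rintro ⟨h1, h2⟩
  have e1 : (p₁ * q₂ - p₂ * q₁) * x = q₂ * (p₁ * x + q₁ * y) - q₁ * (p₂ * x + q₂ * y) := by ring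
  have e2 : (p₁ * q₂ - p₂ * q₁) * y = -p₂ * (p₁ * x + q₁ * y) + p₁ * (p₂ * x + q₂ * y) := by ring
  rw [h1, h2] at e1 e2
  simp only [mul_zero, sub_zero, zero_add, neg_mul, neg_zero, add_zero, zero_sub, neg_eq_zero] at e1 e2
  rcases mul_eq_zero.mp e1 with h | h
  · exact hdet h
  · rcases mul_eq_zero.mp e2 with h' | h'
    · exact hdet h'
    · exact hxy ⟨h, h'⟩

/-- Choose `x` so that `|2(ax+β)| ≤ a`. -/
theorem round_lemma (a β : ℤ) (ha : 1 ≤ a) : ∃ x : ℤ, (2 * (a * x + β)) ^ 2 ≤ a ^ 2 := by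
  have h1 := Int.emod_nonneg β (by omega : a ≠ 0)
  have h2 := Int.emod_lt_of_pos β (by omega : 0 < a)
  have h3 := Int.mul_ediv_add_emod β a
  by_cases hc : 2 * (β % a) ≤ a
  · refine ⟨-(β / a), ?_⟩
    have : a * -(β / a) + β = β % a := by rw [mul_neg]; omega
    rw [this]
    nlinarith
  · refine ⟨-(β / a) - 1, ?_⟩
    have : a * (-(β / a) - 1) + β = β % a - a := by rw [mul_sub, mul_neg, mul_one]; omega
    rw [this]
    nlinarith

/-- Descent: a positive–definite binary form attains a small value at a coprime vector. -/
theorem bin_min_aux : ∀ N : ℕ, ∀ G : Bin, G.PD → G.a.toNat ≤ N →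
    ∃ x y : ℤ, IsCoprime x y ∧ 0 < G.Q x y ∧ 3 * (G.Q x y) ^ 2 ≤ 4 * G.det := by
  intro N
  induction N with
  | zero => intro G hPD h0; have := pd_a hPD; omega
  | succ N ih =>
    intro G hPD hle
    have ha := pd_a hPD
    have hd := pd_det hPD
    by_cases hcase : 3 * G.a ^ 2 ≤ 4 * G.det
    · refine ⟨1, 0, isCoprime_one_left, ?_, ?_⟩
      · apply hPD; simp
      · have : G.Q 1 0 = G.a := by simp [Q]
        rw [this]; exact hcase
    · push_neg at hcase
      obtain ⟨x₀, hx₀⟩ := round_lemma G.a G.b ha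
      set g := G.Q x₀ 1 with hg
      have hgpos : 0 < g := hPD x₀ 1 (by simp)
      have hkey := G.key x₀ 1
      have hlt : g < G.a := by nlinarith
      set G' := G.sub x₀ 1 (-1) 0 with hG'
      have hdet' : G'.det = G.det := by rw [hG', det_sub]; ring_nf
      have hPD' : G'.PD := pd_sub hPD _ _ _ _ (by norm_num)
      have ha' : G'.a = g := by simp [hG', sub, hg]
      obtain ⟨x', y', hcop, hpos', hbound'⟩ := ih G' hPD' (by omega)
      refine ⟨x₀ * x' + -1 * y', 1 * x' + 0 * y', ?_, ?_, ?_⟩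
      · obtain ⟨u, v, huv⟩ := hcop
        refine ⟨-v, u + v * x₀, ?_⟩
        ring_nf
        linear_combination huv
      · rw [← Q_sub]; exact hpos'
      · rw [← Q_sub, ← hdet']; exact hbound'

theorem bin_min (G : Bin) (hPD : G.PD) :
    ∃ x y : ℤ, IsCoprime x y ∧ 0 < G.Q x y ∧ 3 * (G.Q x y) ^ 2 ≤ 4 * G.det :=
  bin_min_aux G.a.toNat G hPD le_rfl

def IsGram (G : Bin) : Prop :=
  ∃ p₁ p₂ q₁ q₂ : ℤ, G.a = p₁ ^ 2 + p₂ ^ 2 ∧ G.b = p₁ * q₁ + p₂ * q₂ ∧ G.d = q₁ ^ 2 + q₂ ^ 2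

theorem gram_sub {G : Bin} (h : G.IsGram) (r₁ r₂ s₁ s₂ : ℤ) : (G.sub r₁ r₂ s₁ s₂).IsGram := by
  obtain ⟨p₁, p₂, q₁, q₂, h1, h2, h3⟩ := h
  exact ⟨p₁ * r₁ + q₁ * r₂, p₂ * r₁ + q₂ * r₂, p₁ * s₁ + q₁ * s₂, p₂ * s₁ + q₂ * s₂, by
    simp only [sub, Q]; rw [h1, h2, h3]; ring, by
    simp only [sub]; rw [h1, h2, h3]; ring, by
    simp only [sub, Q]; rw [h1, h2, h3]; ring⟩

theorem sub_sub (G : Bin) (p₁ p₂ q₁ q₂ r₁ r₂ s₁ s₂ : ℤ) :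
    (G.sub p₁ p₂ q₁ q₂).sub r₁ r₂ s₁ s₂ =
      G.sub (p₁ * r₁ + q₁ * r₂) (p₂ * r₁ + q₂ * r₂) (p₁ * s₁ + q₁ * s₂) (p₂ * s₁ + q₂ * s₂) := by
  simp only [sub, Q, Bin.mk.injEq]
  refine ⟨by ring, by ring, by ring⟩

theorem sub_id (G : Bin) : G.sub 1 0 0 1 = G := by
  cases G
  simp only [sub, Q, Bin.mk.injEq]
  refine ⟨by ring, by ring, by ring⟩

/-- A positive-definite binary form of determinant 1 is a Gram matrix. -/
theorem bin_gram (G : Bin) (hPD : G.PD) (hdet : G.det = 1) : G.IsGram := by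
  obtain ⟨x, y, hcop, hpos, hbound⟩ := bin_min G hPD
  rw [hdet] at hbound
  have hg1 : G.Q x y = 1 := by nlinarith
  obtain ⟨u, v, huv⟩ := hcop
  -- G' = G.sub with matrix [[x, -v],[y, u]], det = u x + v y = 1
  set G' := G.sub x y (-v) u with hG'
  have hdet' : G'.det = 1 := by
    rw [hG', det_sub, hdet]
    have : x * u - y * -v = 1 := by linear_combination huv
    rw [this]; ring
  have ha' : G'.a = 1 := by
    have : G'.a = G.Q x y := by simp [hG', sub]
    rw [this, hg1]
  -- G' = ⟨1, b', 1 + b'^2⟩ is a Gram matrix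
  have hgram' : G'.IsGram := by
    refine ⟨1, 0, G'.b, 1, by rw [ha']; ring, by ring, ?_⟩
    have : G'.det = G'.a * G'.d - G'.b ^ 2 := rfl
    rw [hdet', ha'] at this
    nlinarith [this]
  -- transfer back:  G = G'.sub u (-y) v x
  have hback : G'.sub u (-y) v x = G := by
    rw [hG', sub_sub]
    have c1 : x * u + -v * -y = 1 := by linear_combination huv
    have c2 : y * u + u * -y = 0 := by ring
    have c3 : x * v + -v * x = 0 := by ring
    have c4 : y * v + u * x = 1 := by linear_combination huv
    rw [c1, c2, c3, c4, sub_id]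
  rw [← hback]
  exact gram_sub hgram' _ _ _ _

end Bin


/-- Ternary quadratic form `a x² + d y² + f z² + 2b xy + 2c xz + 2e yz`. -/
structure Ter where
  a : ℤ
  b : ℤ
  c : ℤ
  d : ℤ
  e : ℤ
  f : ℤ

namespace Ter

def Q (F : Ter) (x y z : ℤ) : ℤ :=
  F.a * x ^ 2 + F.d * y ^ 2 + F.f * z ^ 2 + 2 * F.b * x * y + 2 * F.c * x * z + 2 * F.e * y * z

def Bil (F : Ter) (u₁ u₂ u₃ v₁ v₂ v₃ : ℤ) : ℤ :=
  F.a * u₁ * v₁ + F.d * u₂ * v₂ + F.f * u₃ * v₃ + F.b * (u₁ * v₂ + u₂ * v₁) +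
    F.c * (u₁ * v₃ + u₃ * v₁) + F.e * (u₂ * v₃ + u₃ * v₂)

def det (F : Ter) : ℤ :=
  F.a * (F.d * F.f - F.e ^ 2) - F.b * (F.b * F.f - F.c * F.e) + F.c * (F.b * F.e - F.c * F.d)

def PD (F : Ter) : Prop := ∀ x y z : ℤ, ¬(x = 0 ∧ y = 0 ∧ z = 0) → 0 < F.Q x y z

def sub (F : Ter) (p₁ p₂ p₃ q₁ q₂ q₃ r₁ r₂ r₃ : ℤ) : Ter :=
  ⟨F.Q p₁ p₂ p₃, F.Bil p₁ p₂ p₃ q₁ q₂ q₃, F.Bil p₁ p₂ p₃ r₁ r₂ r₃, F.Q q₁ q₂ q₃,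
    F.Bil q₁ q₂ q₃ r₁ r₂ r₃, F.Q r₁ r₂ r₃⟩

def det3 (p₁ p₂ p₃ q₁ q₂ q₃ r₁ r₂ r₃ : ℤ) : ℤ :=
  p₁ * (q₂ * r₃ - q₃ * r₂) - q₁ * (p₂ * r₃ - p₃ * r₂) + r₁ * (p₂ * q₃ - p₃ * q₂)

theorem Q_sub (F : Ter) (p₁ p₂ p₃ q₁ q₂ q₃ r₁ r₂ r₃ x y z : ℤ) :
    (F.sub p₁ p₂ p₃ q₁ q₂ q₃ r₁ r₂ r₃).Q x y z =
      F.Q (p₁ * x + q₁ * y + r₁ * z) (p₂ * x + q₂ * y + r₂ * z) (p₃ * x + q₃ * y + r₃ * z) := by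
  simp only [sub, Q, Bil]; ring

theorem det_sub (F : Ter) (p₁ p₂ p₃ q₁ q₂ q₃ r₁ r₂ r₃ : ℤ) :
    (F.sub p₁ p₂ p₃ q₁ q₂ q₃ r₁ r₂ r₃).det =
      (det3 p₁ p₂ p₃ q₁ q₂ q₃ r₁ r₂ r₃) ^ 2 * F.det := by
  simp only [sub, det, det3, Q, Bil]; ring

theorem sub_sub (F : Ter) (p₁ p₂ p₃ q₁ q₂ q₃ r₁ r₂ r₃ p₁' p₂' p₃' q₁' q₂' q₃' r₁' r₂' r₃' : ℤ) :
    (F.sub p₁ p₂ p₃ q₁ q₂ q₃ r₁ r₂ r₃).sub p₁' p₂' p₃' q₁' q₂' q₃' r₁' r₂' r₃' =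
      F.sub (p₁ * p₁' + q₁ * p₂' + r₁ * p₃') (p₂ * p₁' + q₂ * p₂' + r₂ * p₃')
        (p₃ * p₁' + q₃ * p₂' + r₃ * p₃') (p₁ * q₁' + q₁ * q₂' + r₁ * q₃')
        (p₂ * q₁' + q₂ * q₂' + r₂ * q₃') (p₃ * q₁' + q₃ * q₂' + r₃ * q₃')
        (p₁ * r₁' + q₁ * r₂' + r₁ * r₃') (p₂ * r₁' + q₂ * r₂' + r₂ * r₃')
        (p₃ * r₁' + q₃ * r₂' + r₃ * r₃') := by
  simp only [sub, Q, Bil, Ter.mk.injEq]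
  refine ⟨by ring, by ring, by ring, by ring, by ring, by ring⟩

theorem sub_id (F : Ter) : F.sub 1 0 0 0 1 0 0 0 1 = F := by
  cases F
  simp only [sub, Q, Bil, Ter.mk.injEq]
  refine ⟨by ring, by ring, by ring, by ring, by ring, by ring⟩

theorem pd_sub {F : Ter} (h : F.PD) (p₁ p₂ p₃ q₁ q₂ q₃ r₁ r₂ r₃ : ℤ)
    (hdet : det3 p₁ p₂ p₃ q₁ q₂ q₃ r₁ r₂ r₃ ≠ 0) :
    (F.sub p₁ p₂ p₃ q₁ q₂ q₃ r₁ r₂ r₃).PD := by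
  intro x y z hxyz
  rw [Q_sub]
  apply h
  rintro ⟨h1, h2, h3⟩
  set D := det3 p₁ p₂ p₃ q₁ q₂ q₃ r₁ r₂ r₃ with hD
  have e1 : D * x = (q₂ * r₃ - q₃ * r₂) * (p₁ * x + q₁ * y + r₁ * z) -
      (q₁ * r₃ - q₃ * r₁) * (p₂ * x + q₂ * y + r₂ * z) +
      (q₁ * r₂ - q₂ * r₁) * (p₃ * x + q₃ * y + r₃ * z) := by rw [hD]; simp only [det3]; ring
  have e2 : D * y = -(p₂ * r₃ - p₃ * r₂) * (p₁ * x + q₁ * y + r₁ * z) +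
      (p₁ * r₃ - p₃ * r₁) * (p₂ * x + q₂ * y + r₂ * z) -
      (p₁ * r₂ - p₂ * r₁) * (p₃ * x + q₃ * y + r₃ * z) := by rw [hD]; simp only [det3]; ring
  have e3 : D * z = (p₂ * q₃ - p₃ * q₂) * (p₁ * x + q₁ * y + r₁ * z) -
      (p₁ * q₃ - p₃ * q₁) * (p₂ * x + q₂ * y + r₂ * z) +
      (p₁ * q₂ - p₂ * q₁) * (p₃ * x + q₃ * y + r₃ * z) := by rw [hD]; simp only [det3]; ring
  rw [h1, h2, h3] at e1 e2 e3
  simp only [mul_zero, sub_zero, add_zero, zero_add, zero_sub, neg_mul, neg_zero] at e1 e2 e3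
  rcases mul_eq_zero.mp e1 with h | h
  · exact hdet h
  rcases mul_eq_zero.mp e2 with h' | h'
  · exact hdet h'
  rcases mul_eq_zero.mp e3 with h'' | h''
  · exact hdet h''
  exact hxyz ⟨h, h', h''⟩

theorem pd_a {F : Ter} (h : F.PD) : 1 ≤ F.a := by
  have := h 1 0 0 (by simp)
  simp only [Q] at this; omega

/-- Sylvester criterion (sufficiency). -/
theorem pd_of {F : Ter} (ha : 1 ≤ F.a) (hB : 1 ≤ F.a * F.d - F.b ^ 2) (hdet : 1 ≤ F.det) :
    F.PD := by
  intro x y z hxyz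
  set B := F.a * F.d - F.b ^ 2 with hBd
  have key : B * (F.a * F.Q x y z) = B * (F.a * x + F.b * y + F.c * z) ^ 2 +
      (B * y + (F.a * F.e - F.b * F.c) * z) ^ 2 + (F.a * F.det) * z ^ 2 := by
    rw [hBd]; simp only [Q, det]; ring
  have had : 1 ≤ F.a * F.det := by nlinarith
  by_contra hQ
  push_neg at hQ
  have hBAQ : B * (F.a * F.Q x y z) ≤ 0 := by
    have h1 : F.a * F.Q x y z ≤ 0 := mul_nonpos_of_nonneg_of_nonpos (by linarith) hQ
    exact mul_nonpos_of_nonneg_of_nonpos (by linarith) h1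
  have ht1 : 0 ≤ B * (F.a * x + F.b * y + F.c * z) ^ 2 :=
    mul_nonneg (by linarith) (sq_nonneg _)
  have ht2 : 0 ≤ (B * y + (F.a * F.e - F.b * F.c) * z) ^ 2 := sq_nonneg _
  have ht3 : 0 ≤ (F.a * F.det) * z ^ 2 := mul_nonneg (by linarith) (sq_nonneg _)
  have hz : z = 0 := by
    have h3 : (F.a * F.det) * z ^ 2 = 0 := by linarith
    have := mul_eq_zero.mp h3
    rcases this with h | h
    · omega
    · exact pow_eq_zero_iff (by norm_num) |>.mp h
  subst hz
  have hy : y = 0 := by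
    have h2 : (B * y + (F.a * F.e - F.b * F.c) * 0) ^ 2 = 0 := by
      simp only [mul_zero, add_zero] at *
      linarith
    have h2' : B * y + (F.a * F.e - F.b * F.c) * 0 = 0 := by
      exact pow_eq_zero_iff (by norm_num) |>.mp h2
    have : B * y = 0 := by linarith [h2']
    rcases mul_eq_zero.mp this with h | h
    · omega
    · exact h
  subst hy
  have hx : x = 0 := by
    have h1 : B * (F.a * x + F.b * 0 + F.c * 0) ^ 2 = 0 := by
      simp only [mul_zero, add_zero] at *
      linarith
    rcases mul_eq_zero.mp h1 with h | h
    · omega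
    · have := pow_eq_zero_iff (two_ne_zero) |>.mp h
      simp only [mul_zero, add_zero] at this
      rcases mul_eq_zero.mp this with h' | h'
      · omega
      · exact h'
  exact hxyz ⟨hx, rfl, rfl⟩

/-- The associated binary form on the orthogonal complement of `e₁`. -/
def bg (F : Ter) : Bin :=
  ⟨F.a * F.d - F.b ^ 2, F.a * F.e - F.b * F.c, F.a * F.f - F.c ^ 2⟩

theorem bg_key (F : Ter) (x y z : ℤ) :
    F.a * F.Q x y z = (F.a * x + F.b * y + F.c * z) ^ 2 + F.bg.Q y z := by
  simp only [Q, bg, Bin.Q]; ring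

theorem bg_det (F : Ter) : F.bg.det = F.a * F.det := by
  simp only [bg, Bin.det, det]; ring

theorem bg_pd {F : Ter} (h : F.PD) : F.bg.PD := by
  have ha := pd_a h
  intro y z hyz
  have key : F.a ^ 2 * F.bg.Q y z = F.a * F.Q (-(F.b * y + F.c * z)) (F.a * y) (F.a * z) := by
    simp only [Q, bg, Bin.Q]; ring
  have hpos : 0 < F.Q (-(F.b * y + F.c * z)) (F.a * y) (F.a * z) := by
    apply h
    rintro ⟨h1, h2, h3⟩
    rcases mul_eq_zero.mp h2 with h | h
    · omega
    rcases mul_eq_zero.mp h3 with h' | h'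
    · omega
    exact hyz ⟨h, h'⟩
  nlinarith

def IsGram (F : Ter) : Prop :=
  ∃ p₁ p₂ p₃ q₁ q₂ q₃ r₁ r₂ r₃ : ℤ,
    F.a = p₁ ^ 2 + p₂ ^ 2 + p₃ ^ 2 ∧ F.b = p₁ * q₁ + p₂ * q₂ + p₃ * q₃ ∧
    F.c = p₁ * r₁ + p₂ * r₂ + p₃ * r₃ ∧ F.d = q₁ ^ 2 + q₂ ^ 2 + q₃ ^ 2 ∧
    F.e = q₁ * r₁ + q₂ * r₂ + q₃ * r₃ ∧ F.f = r₁ ^ 2 + r₂ ^ 2 + r₃ ^ 2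

theorem gram_sub {F : Ter} (h : F.IsGram) (p₁ p₂ p₃ q₁ q₂ q₃ r₁ r₂ r₃ : ℤ) :
    (F.sub p₁ p₂ p₃ q₁ q₂ q₃ r₁ r₂ r₃).IsGram := by
  obtain ⟨a₁, a₂, a₃, b₁, b₂, b₃, c₁, c₂, c₃, h1, h2, h3, h4, h5, h6⟩ := h
  refine ⟨a₁ * p₁ + b₁ * p₂ + c₁ * p₃, a₂ * p₁ + b₂ * p₂ + c₂ * p₃, a₃ * p₁ + b₃ * p₂ + c₃ * p₃,
    a₁ * q₁ + b₁ * q₂ + c₁ * q₃, a₂ * q₁ + b₂ * q₂ + c₂ * q₃, a₃ * q₁ + b₃ * q₂ + c₃ * q₃,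
    a₁ * r₁ + b₁ * r₂ + c₁ * r₃, a₂ * r₁ + b₂ * r₂ + c₂ * r₃, a₃ * r₁ + b₃ * r₂ + c₃ * r₃,
    ?_, ?_, ?_, ?_, ?_, ?_⟩ <;>
  · simp only [sub, Q, Bil]
    rw [h1, h2, h3, h4, h5, h6]
    ring

end Ter

namespace Ter

theorem ter_gram_aux : ∀ N : ℕ, ∀ F : Ter, F.PD → F.det = 1 → F.a.toNat ≤ N → F.IsGram := by
  intro N
  induction N with
  | zero => intro F hPD _ h0; have := pd_a hPD; omega
  | succ N ih =>
    intro F hPD hdet hle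
    have ha := pd_a hPD
    by_cases hcase : F.a = 1
    -- Base: leading coefficient 1; clear the first row and use the binary result.
    · set F₁ := F.sub 1 0 0 (-F.b) 1 0 (-F.c) 0 1 with hF₁
      have ha₁ : F₁.a = 1 := by
        simp only [hF₁, sub, Q]; linear_combination hcase
      have hb₁ : F₁.b = 0 := by
        simp only [hF₁, sub, Bil]; linear_combination (-F.b) * hcase
      have hc₁ : F₁.c = 0 := by
        simp only [hF₁, sub, Bil]; linear_combination (-F.c) * hcase
      have hdet₁ : F₁.det = 1 := by
        rw [hF₁, det_sub, hdet]
        simp only [det3]; ring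
      have hPD₁ : F₁.PD := pd_sub hPD _ _ _ _ _ _ _ _ _ (by simp [det3])
      -- the lower-right binary block
      set B : Bin := ⟨F₁.d, F₁.e, F₁.f⟩ with hB
      have hBpd : B.PD := by
        intro y z hyz
        have : B.Q y z = F₁.Q 0 y z := by simp only [hB, Bin.Q, Q]; ring
        rw [this]
        exact hPD₁ 0 y z (by tauto)
      have hBdet : B.det = 1 := by
        have : F₁.det = F₁.a * (F₁.d * F₁.f - F₁.e ^ 2) - F₁.b * (F₁.b * F₁.f - F₁.c * F₁.e) +
            F₁.c * (F₁.b * F₁.e - F₁.c * F₁.d) := rfl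
        rw [ha₁, hb₁, hc₁] at this
        simp only [hB, Bin.det]
        rw [hdet₁] at this
        linarith [this]
      obtain ⟨u₁, u₂, v₁, v₂, hg1, hg2, hg3⟩ := Bin.bin_gram B hBpd hBdet
      have hgram₁ : F₁.IsGram := by
        refine ⟨1, 0, 0, 0, u₁, u₂, 0, v₁, v₂, by rw [ha₁]; ring, by rw [hb₁]; ring,
          by rw [hc₁]; ring, ?_, ?_, ?_⟩
        · have : F₁.d = B.a := rfl; rw [this, hg1]; ring
        · have : F₁.e = B.b := rfl; rw [this, hg2]; ring
        · have : F₁.f = B.d := rfl; rw [this, hg3]; ring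
      have hback : F₁.sub 1 0 0 F.b 1 0 F.c 0 1 = F := by
        rw [hF₁, sub_sub]
        have c1 : 1 * 1 + -F.b * 0 + -F.c * 0 = (1 : ℤ) := by ring
        have c2 : 0 * 1 + 1 * 0 + 0 * 0 = (0 : ℤ) := by ring
        have c3 : 0 * 1 + 0 * 0 + 1 * 0 = (0 : ℤ) := by ring
        have c4 : 1 * F.b + -F.b * 1 + -F.c * 0 = (0 : ℤ) := by ring
        have c5 : 0 * F.b + 1 * 1 + 0 * 0 = (1 : ℤ) := by ring
        have c6 : 0 * F.b + 0 * 1 + 1 * 0 = (0 : ℤ) := by ring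
        have c7 : 1 * F.c + -F.b * 0 + -F.c * 1 = (0 : ℤ) := by ring
        have c8 : 0 * F.c + 1 * 0 + 0 * 1 = (0 : ℤ) := by ring
        have c9 : 0 * F.c + 0 * 0 + 1 * 1 = (1 : ℤ) := by ring
        rw [c1, c2, c3, c4, c5, c6, c7, c8, c9, sub_id]
      rw [← hback]
      exact gram_sub hgram₁ _ _ _ _ _ _ _ _ _
    -- Step: leading coefficient ≥ 2; descend.
    · have ha2 : 2 ≤ F.a := by omega
      have hGpd := bg_pd hPD
      have hGdet : F.bg.det = F.a := by rw [bg_det, hdet]; ring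
      obtain ⟨y₀, z₀, hcop, hgpos, hgbound⟩ := Bin.bin_min F.bg hGpd
      set g := F.bg.Q y₀ z₀ with hgdef
      rw [hGdet] at hgbound
      -- 4 g < 3 a²
      have hglt : 4 * g < 3 * F.a ^ 2 := by nlinarith
      obtain ⟨x₀, hx₀⟩ := Bin.round_lemma F.a (F.b * y₀ + F.c * z₀) (by omega)
      have hkey := bg_key F x₀ y₀ z₀
      set v₀ := F.Q x₀ y₀ z₀ with hv₀
      have hvpos : 0 < v₀ := by
        apply hPD
        rintro ⟨h1, h2, h3⟩
        rw [h2, h3] at hcop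
        exact not_isCoprime_zero_zero hcop
      have hvlt : v₀ < F.a := by nlinarith
      obtain ⟨s, t, hst⟩ := hcop
      -- change of basis U with columns (x₀,y₀,z₀), (0,-t,s), (1,0,0); det = s y₀ + t z₀ = 1
      have hstdet : det3 x₀ y₀ z₀ 0 (-t) s 1 0 0 = 1 := by
        simp only [det3]; linear_combination hst
      set F' := F.sub x₀ y₀ z₀ 0 (-t) s 1 0 0 with hF'
      have hPD' : F'.PD := pd_sub hPD _ _ _ _ _ _ _ _ _ (by rw [hstdet]; norm_num)
      have hdet' : F'.det = 1 := by rw [hF', det_sub, hstdet, hdet]; ring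
      have ha' : F'.a = v₀ := by simp only [hF', sub, hv₀]
      have hgram' : F'.IsGram := ih F' hPD' hdet' (by omega)
      -- transfer back through the inverse, columns (0,0,1), (s,-z₀,-s*x₀), (t,y₀,-t*x₀)
      have hback : F'.sub 0 0 1 s (-z₀) (-(s * x₀)) t y₀ (-(t * x₀)) = F := by
        rw [hF', sub_sub]
        have c1 : x₀ * 0 + 0 * 0 + 1 * 1 = (1 : ℤ) := by ring
        have c2 : y₀ * 0 + -t * 0 + 0 * 1 = (0 : ℤ) := by ring
        have c3 : z₀ * 0 + s * 0 + 0 * 1 = (0 : ℤ) := by ring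
        have c4 : x₀ * s + 0 * -z₀ + 1 * -(s * x₀) = (0 : ℤ) := by ring
        have c5 : y₀ * s + -t * -z₀ + 0 * -(s * x₀) = (1 : ℤ) := by linear_combination hst
        have c6 : z₀ * s + s * -z₀ + 0 * -(s * x₀) = (0 : ℤ) := by ring
        have c7 : x₀ * t + 0 * y₀ + 1 * -(t * x₀) = (0 : ℤ) := by ring
        have c8 : y₀ * t + -t * y₀ + 0 * -(t * x₀) = (0 : ℤ) := by ring
        have c9 : z₀ * t + s * y₀ + 0 * -(t * x₀) = (1 : ℤ) := by linear_combination hst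
        rw [c1, c2, c3, c4, c5, c6, c7, c8, c9, sub_id]
      rw [← hback]
      exact gram_sub hgram' _ _ _ _ _ _ _ _ _

theorem rep_of {F : Ter} (hPD : F.PD) (hdet : F.det = 1) {n x y z : ℤ} (h : F.Q x y z = n) :
    ∃ u v w : ℤ, u ^ 2 + v ^ 2 + w ^ 2 = n := by
  obtain ⟨p₁, p₂, p₃, q₁, q₂, q₃, r₁, r₂, r₃, h1, h2, h3, h4, h5, h6⟩ :=
    ter_gram_aux F.a.toNat F hPD hdet le_rfl
  refine ⟨p₁ * x + q₁ * y + r₁ * z, p₂ * x + q₂ * y + r₂ * z, p₃ * x + q₃ * y + r₃ * z, ?_⟩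
  rw [← h]
  simp only [Q]
  rw [h1, h2, h3, h4, h5, h6]
  ring

end Ter

/-- Core construction: given a suitable prime `p`, build a positive definite ternary form
of determinant 1 representing `n`. -/
theorem core (n : ℤ) (hn : 1 ≤ n) (p : ℕ) (hp : p.Prime) (hodd : p % 2 = 1)
    (hpn : n < (p : ℤ)) (c : ℤ) (hc : c = 1 ∨ c = 2) (hdvd : n ∣ c * (p : ℤ) + 1)
    (hsq : IsSquare ((-n : ℤ) : ZMod p)) :
    ∃ u v w : ℤ, u ^ 2 + v ^ 2 + w ^ 2 = n := by
  have hp2 : (2 : ℤ) ≤ (p : ℤ) := by exact_mod_cast hp.two_le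
  haveI : Fact p.Prime := ⟨hp⟩
  haveI : NeZero p := ⟨hp.ne_zero⟩
  set a : ℤ := c * (p : ℤ) with hadef
  have ha1 : 1 ≤ a := by rcases hc with h | h <;> rw [hadef, h] <;> omega
  obtain ⟨P, hP⟩ := hdvd
  have hPpos : 1 ≤ P := by nlinarith
  -- get s : ℤ with p ∣ s² + n
  obtain ⟨r, hr⟩ := hsq
  have hps : ((p : ℤ)) ∣ (r.val : ℤ) ^ 2 + n := by
    have : (((r.val : ℤ) ^ 2 + n : ℤ) : ZMod p) = 0 := by
      push_cast
      rw [ZMod.natCast_val, ZMod.cast_id]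
      have : ((n : ℤ) : ZMod p) = -(r * r) := by
        rw [show ((n : ℤ) : ZMod p) = -((-n : ℤ) : ZMod p) by push_cast; ring, hr]
      rw [this]; ring
    exact_mod_cast (ZMod.intCast_zmod_eq_zero_iff_dvd _ p).mp this
  set s : ℤ := (r.val : ℤ) with hsdef
  -- b₀ := s * P satisfies p ∣ P + b₀²
  have hpb₀ : (p : ℤ) ∣ P + (s * P) ^ 2 := by
    obtain ⟨k, hk⟩ := hps
    have hP' : c * (p : ℤ) + 1 = n * P := by rw [← hadef]; exact hP
    exact ⟨P ^ 2 * k - P * c, by linear_combination P ^ 2 * hk + P * hP'⟩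
  -- parity adjustment
  set t : ℤ := (P - s * P) % 2 with htdef
  set b : ℤ := s * P + (p : ℤ) * t with hbdef
  have hpb : (p : ℤ) ∣ P + b ^ 2 := by
    obtain ⟨k, hk⟩ := hpb₀
    refine ⟨k + (2 * s * P * t + (p : ℤ) * t ^ 2), ?_⟩
    rw [hbdef]
    have : P + (s * P + (p : ℤ) * t) ^ 2 =
        (P + (s * P) ^ 2) + (p : ℤ) * (2 * s * P * t + (p : ℤ) * t ^ 2) := by ring
    rw [this, hk]; ring
  have h2b : (2 : ℤ) ∣ P + b ^ 2 := by
    have hbb : (2 : ℤ) ∣ b ^ 2 + b := by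
      have := Int.even_mul_succ_self b
      obtain ⟨k, hk⟩ := this
      exact ⟨k, by nlinarith [hk]⟩
    have hPb : (2 : ℤ) ∣ P - b := by
      have hx : (P - s * P) % 2 = t := htdef.symm
      rw [hbdef]
      have ht01 : t = 0 ∨ t = 1 := by omega
      rcases ht01 with h | h <;> rw [h] at hx ⊢ <;> omega
    obtain ⟨k1, hk1⟩ := hbb
    obtain ⟨k2, hk2⟩ := hPb
    exact ⟨k1 + k2, by linarith⟩
  have hab : a ∣ P + b ^ 2 := by
    rcases hc with h | h
    · rw [hadef, h, one_mul]; exact hpb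
    · rw [hadef, h]
      obtain ⟨k, hk⟩ := hpb
      have h2k : (2 : ℤ) ∣ k := by
        have hev : Even ((p : ℤ) * k) := by
          obtain ⟨l, hl⟩ := h2b
          exact ⟨l, by omega⟩
        rcases Int.even_mul.mp hev with he | he
        · exfalso
          obtain ⟨j, hj⟩ := he
          omega
        · obtain ⟨j, hj⟩ := he
          exact ⟨j, by omega⟩
      obtain ⟨j, hj⟩ := h2k
      exact ⟨j, by rw [hk, hj]; ring⟩
  obtain ⟨d, hd⟩ := hab
  -- the ternary form
  set F : Ter := ⟨a, b, 0, d, 1, n⟩ with hF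
  have hFdet : F.det = 1 := by
    simp only [hF, Ter.det]
    have : a * (d * n - 1 ^ 2) - b * (b * n - 0 * 1) + 0 * (b * 1 - 0 * d) =
        n * (a * d - b ^ 2) - a := by ring
    rw [this, ← hd]
    linarith [hP]
  have hFP : F.a * F.d - F.b ^ 2 = P := by
    simp only [hF]
    linarith [hd]
  have hPD : F.PD := Ter.pd_of (by simpa [hF] using ha1) (by rw [hFP]; exact hPpos)
    (by rw [hFdet])
  have hrep : F.Q 0 0 1 = n := by simp [hF, Ter.Q]
  exact Ter.rep_of hPD hFdet hrep

open ZMod in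
theorem dirichlet_step (n : ℤ) (hn : 1 ≤ n) (α u v : ℤ) (huv : u * α + v * (4 * n) = 1) :
    ∃ p : ℕ, p.Prime ∧ p % 2 = 1 ∧ 4 * n < (p : ℤ) ∧ (4 * n) ∣ ((p : ℤ) - α) := by
  set M : ℕ := (4 * n).toNat with hM
  have hM4 : (M : ℤ) = 4 * n := by omega
  haveI : NeZero M := ⟨by omega⟩
  have hunit : IsUnit ((α : ℤ) : ZMod M) := by
    apply IsUnit.of_mul_eq_one ((u : ℤ) : ZMod M)
    have h0 : ((4 * n : ℤ) : ZMod M) = 0 := by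
      rw [← hM4]
      simp
    have h1 : ((u * α + v * (4 * n) : ℤ) : ZMod M) = 1 := by rw [huv]; exact Int.cast_one
    rw [Int.cast_add, Int.cast_mul, Int.cast_mul, h0, mul_zero, add_zero] at h1
    rw [mul_comm]
    exact h1
  obtain ⟨p, hgt, hp, hmod⟩ := Nat.forall_exists_prime_gt_and_eq_mod hunit M
  refine ⟨p, hp, ?_, by omega, ?_⟩
  · rcases hp.eq_two_or_odd with h | h
    · omega
    · exact h
  · have h0 : (((p : ℤ) - α : ℤ) : ZMod M) = 0 := by
      push_cast
      rw [hmod]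
      ring
    have := (ZMod.intCast_zmod_eq_zero_iff_dvd _ M).mp h0
    rwa [hM4] at this

theorem caseA (n : ℤ) (hn : 1 ≤ n) (h1 : n % 4 = 1) :
    ∃ u v w : ℤ, u ^ 2 + v ^ 2 + w ^ 2 = n := by
  obtain ⟨p, hp, hodd, hgt, hdvd⟩ :=
    dirichlet_step n hn (2 * n - 1) (-(2 * n + 1)) n (by ring)
  haveI : Fact p.Prime := ⟨hp⟩
  obtain ⟨j, hj⟩ := hdvd
  set w : ℤ := n * j with hw
  have hj' : (p : ℤ) = 2 * n - 1 + 4 * w := by rw [hw]; linear_combination hj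
  set nn : ℕ := n.toNat with hnn
  have hnnz : (nn : ℤ) = n := by omega
  have hnodd : nn % 2 = 1 := by omega
  have hnn4 : nn % 4 = 1 := by omega
  have hoddp : Odd p := Nat.odd_iff.mpr hodd
  have hoddn : Odd nn := Nat.odd_iff.mpr hnodd
  have hp4 : p % 4 = 1 := by omega
  have hdvdn : n ∣ (p : ℤ) + 1 := ⟨2 + 4 * j, by linear_combination hj⟩
  have hJ : jacobiSym (-n) p = 1 := by
    have e1 : jacobiSym (-n) p = ZMod.χ₄ p * jacobiSym ((nn : ℕ) : ℤ) p := by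
      rw [show (-n : ℤ) = -((nn : ℕ) : ℤ) by rw [hnnz]]
      exact jacobiSym.neg _ hoddp
    have e2 : ZMod.χ₄ (p : ℕ) = 1 := by
      rw [ZMod.χ₄_nat_eq_if_mod_four, if_neg (by omega), if_pos hp4]
    have e4 : jacobiSym ((nn : ℕ) : ℤ) p = jacobiSym ((p : ℕ) : ℤ) nn :=
      jacobiSym.quadratic_reciprocity_one_mod_four hnn4 hoddp
    have e5 : jacobiSym ((p : ℕ) : ℤ) nn = jacobiSym (-1) nn := by
      apply jacobiSym.mod_left'
      have : ((p : ℕ) : ℤ) ≡ -1 [ZMOD (nn : ℕ)] := by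
        apply Int.ModEq.symm
        apply Int.modEq_iff_dvd.mpr
        rw [hnnz]
        exact ⟨2 + 4 * j, by linear_combination hj⟩
      exact this
    have e6 : jacobiSym (-1) nn = ZMod.χ₄ nn := jacobiSym.at_neg_one hoddn
    have e7 : ZMod.χ₄ (nn : ℕ) = 1 := by
      rw [ZMod.χ₄_nat_eq_if_mod_four, if_neg (by omega), if_pos hnn4]
    rw [e1, e2, e4, e5, e6, e7]; ring
  have hsq : IsSquare ((-n : ℤ) : ZMod p) := ZMod.isSquare_of_jacobiSym_eq_one hJ
  exact core n hn p hp hodd (by omega) 1 (Or.inl rfl) (by rwa [one_mul]) hsq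

theorem caseC (n : ℤ) (hn : 1 ≤ n) (h1 : n % 4 = 2) :
    ∃ u v w : ℤ, u ^ 2 + v ^ 2 + w ^ 2 = n := by
  obtain ⟨k, hk⟩ : ∃ k : ℤ, n = 4 * k + 2 := ⟨(n - 2) / 4, by omega⟩
  obtain ⟨p, hp, hodd, hgt, hdvd⟩ :=
    dirichlet_step n hn (n - 1) (n - 1) (-k) (by rw [hk]; ring)
  haveI : Fact p.Prime := ⟨hp⟩
  obtain ⟨j, hj⟩ := hdvd
  set w : ℤ := n * j with hw
  have hj' : (p : ℤ) = n - 1 + 4 * w := by rw [hw]; linear_combination hj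
  -- 8 ∣ 4 * w since n is even
  have h8 : ∃ w' : ℤ, w = 2 * w' := ⟨(2 * k + 1) * j, by rw [hw, hk]; ring⟩
  obtain ⟨w', hw'⟩ := h8
  set nn : ℕ := n.toNat with hnn
  have hnnz : (nn : ℤ) = n := by omega
  set mm : ℕ := nn / 2 with hmm
  have hmmz : (nn : ℤ) = 2 * (mm : ℤ) := by omega
  have hmodd : mm % 2 = 1 := by omega
  have hoddp : Odd p := Nat.odd_iff.mpr hodd
  have hoddm : Odd mm := Nat.odd_iff.mpr hmodd
  have hp4 : p % 4 = 1 := by omega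
  have hdvdn : n ∣ (p : ℤ) + 1 := ⟨1 + 4 * j, by linear_combination hj⟩
  have hdvdm : ((mm : ℕ) : ℤ) ∣ (p : ℤ) + 1 := by
    refine dvd_trans ⟨2, by omega⟩ hdvdn
  have hJp : jacobiSym ((p : ℕ) : ℤ) mm = ZMod.χ₄ mm := by
    have e5 : jacobiSym ((p : ℕ) : ℤ) mm = jacobiSym (-1) mm := by
      apply jacobiSym.mod_left'
      have : ((p : ℕ) : ℤ) ≡ -1 [ZMOD (mm : ℕ)] := by
        apply Int.ModEq.symm
        apply Int.modEq_iff_dvd.mpr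
        obtain ⟨e, he⟩ := hdvdm
        exact ⟨e, by linear_combination he⟩
      exact this
    rw [e5]
    exact jacobiSym.at_neg_one hoddm
  have hJ : jacobiSym (-n) p = 1 := by
    have e1 : jacobiSym (-n) p = ZMod.χ₄ p * jacobiSym (n : ℤ) p := by
      rw [show (-n : ℤ) = -(n : ℤ) by ring]
      exact jacobiSym.neg _ hoddp
    have e2 : ZMod.χ₄ (p : ℕ) = 1 := by
      rw [ZMod.χ₄_nat_eq_if_mod_four, if_neg (by omega), if_pos hp4]
    have e3 : jacobiSym (n : ℤ) p = jacobiSym 2 p * jacobiSym ((mm : ℕ) : ℤ) p := by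
      rw [show (n : ℤ) = 2 * ((mm : ℕ) : ℤ) by omega]
      exact jacobiSym.mul_left 2 _ p
    have e4 : jacobiSym 2 p = ZMod.χ₈ p := jacobiSym.at_two hoddp
    have e6 : jacobiSym ((mm : ℕ) : ℤ) p = jacobiSym ((p : ℕ) : ℤ) mm :=
      jacobiSym.quadratic_reciprocity_one_mod_four' hoddm hp4
    rcases (by omega : n % 8 = 2 ∨ n % 8 = 6) with h8' | h8'
    · have hp8 : p % 8 = 1 := by omega
      have hm4 : mm % 4 = 1 := by omega
      have e7 : ZMod.χ₈ (p : ℕ) = 1 := by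
        rw [ZMod.χ₈_nat_eq_if_mod_eight, if_neg (by omega), if_pos (by omega)]
      have e8 : ZMod.χ₄ (mm : ℕ) = 1 := by
        rw [ZMod.χ₄_nat_eq_if_mod_four, if_neg (by omega), if_pos hm4]
      rw [e1, e2, e3, e4, e6, e7, hJp, e8]; ring
    · have hp8 : p % 8 = 5 := by omega
      have hm4 : mm % 4 = 3 := by omega
      have e7 : ZMod.χ₈ (p : ℕ) = -1 := by
        rw [ZMod.χ₈_nat_eq_if_mod_eight, if_neg (by omega), if_neg (by omega)]
      have e8 : ZMod.χ₄ (mm : ℕ) = -1 := by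
        rw [ZMod.χ₄_nat_eq_if_mod_four, if_neg (by omega), if_neg (by omega)]
      rw [e1, e2, e3, e4, e6, e7, hJp, e8]; ring
  have hsq : IsSquare ((-n : ℤ) : ZMod p) := ZMod.isSquare_of_jacobiSym_eq_one hJ
  exact core n hn p hp hodd (by omega) 1 (Or.inl rfl) (by rwa [one_mul]) hsq

theorem caseB (n : ℤ) (hn : 1 ≤ n) (h1 : n % 8 = 3) :
    ∃ u v w : ℤ, u ^ 2 + v ^ 2 + w ^ 2 = n := by
  obtain ⟨t, ht⟩ : ∃ t : ℤ, n = 8 * t + 3 := ⟨(n - 3) / 8, by omega⟩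
  obtain ⟨p, hp, hodd, hgt, hdvd⟩ :=
    dirichlet_step n hn (20 * t + 7) (3 * n - 2) (-(15 * t + 4)) (by rw [ht]; ring)
  haveI : Fact p.Prime := ⟨hp⟩
  obtain ⟨j, hj⟩ := hdvd
  set w : ℤ := n * j with hw
  have hj' : (p : ℤ) = 20 * t + 7 + 4 * w := by rw [hw]; linear_combination hj
  set nn : ℕ := n.toNat with hnn
  have hnnz : (nn : ℤ) = n := by omega
  have hnodd : nn % 2 = 1 := by omega
  have hnn4 : nn % 4 = 3 := by omega
  have hnn8 : nn % 8 = 3 := by omega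
  have hoddp : Odd p := Nat.odd_iff.mpr hodd
  have hoddn : Odd nn := Nat.odd_iff.mpr hnodd
  have hp4 : p % 4 = 3 := by omega
  have hdvdn : n ∣ 2 * (p : ℤ) + 1 := ⟨5 + 8 * j, by rw [ht] at hj ⊢; linear_combination 2 * hj⟩
  have hJ : jacobiSym (-n) p = 1 := by
    have e1 : jacobiSym (-n) p = ZMod.χ₄ p * jacobiSym ((nn : ℕ) : ℤ) p := by
      rw [show (-n : ℤ) = -((nn : ℕ) : ℤ) by rw [hnnz]]
      exact jacobiSym.neg _ hoddp
    have e2 : ZMod.χ₄ (p : ℕ) = -1 := by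
      rw [ZMod.χ₄_nat_eq_if_mod_four, if_neg (by omega), if_neg (by omega)]
    have e3 : jacobiSym ((nn : ℕ) : ℤ) p = -jacobiSym ((p : ℕ) : ℤ) nn :=
      jacobiSym.quadratic_reciprocity_three_mod_four hnn4 hp4
    have e4 : jacobiSym ((p : ℕ) : ℤ) nn = jacobiSym (20 * t + 7) nn := by
      apply jacobiSym.mod_left'
      have : ((p : ℕ) : ℤ) ≡ 20 * t + 7 [ZMOD (nn : ℕ)] := by
        apply Int.ModEq.symm
        apply Int.modEq_iff_dvd.mpr
        rw [hnnz]
        exact ⟨4 * j, by linear_combination hj⟩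
      exact this
    -- J(2 | nn) * J(α | nn) = J(2α | nn) = J(-1 | nn) = χ₄ nn = -1 and J(2 | nn) = χ₈ nn = -1
    have e5 : jacobiSym (2 * (20 * t + 7)) nn = jacobiSym 2 nn * jacobiSym (20 * t + 7) nn :=
      jacobiSym.mul_left 2 _ nn
    have e6 : jacobiSym (2 * (20 * t + 7)) nn = jacobiSym (-1) nn := by
      apply jacobiSym.mod_left'
      have : (2 * (20 * t + 7) : ℤ) ≡ -1 [ZMOD (nn : ℕ)] := by
        apply Int.modEq_iff_dvd.mpr
        rw [hnnz, ht]
        exact ⟨-5, by ring⟩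
      exact this
    have e7 : jacobiSym (-1) nn = -1 := by
      rw [jacobiSym.at_neg_one hoddn, ZMod.χ₄_nat_eq_if_mod_four, if_neg (by omega),
        if_neg (by omega)]
    have e8 : jacobiSym 2 nn = -1 := by
      rw [jacobiSym.at_two hoddn, ZMod.χ₈_nat_eq_if_mod_eight, if_neg (by omega),
        if_neg (by omega)]
    have e9 : jacobiSym (20 * t + 7) nn = 1 := by
      rw [e6, e7] at e5
      rw [e8] at e5
      linarith
    rw [e1, e2, e3, e4, e9]; ring
  have hsq : IsSquare ((-n : ℤ) : ZMod p) := ZMod.isSquare_of_jacobiSym_eq_one hJ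
  exact core n hn p hp hodd (by omega) 2 (Or.inr rfl) hdvdn hsq

/-- **Legendre's three squares theorem** (sufficiency). -/
theorem three_sq : ∀ N : ℕ, ∀ n : ℤ, n.toNat ≤ N → 0 ≤ n →
    (∀ l k : ℕ, n ≠ (4 : ℤ) ^ l * (8 * (k : ℤ) + 7)) →
    ∃ u v w : ℤ, u ^ 2 + v ^ 2 + w ^ 2 = n := by
  intro N
  induction N with
  | zero =>
    intro n hle h0 _
    exact ⟨0, 0, 0, by omega⟩
  | succ N ih =>
    intro n hle h0 hform
    rcases (by omega : n = 0 ∨ 1 ≤ n) with h | hn1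
    · exact ⟨0, 0, 0, by omega⟩
    rcases (by omega : n % 4 = 0 ∨ n % 4 = 1 ∨ n % 4 = 2 ∨ n % 8 = 3 ∨ n % 8 = 7) with
      h | h | h | h | h
    · obtain ⟨n', hn'⟩ : ∃ n' : ℤ, n = 4 * n' := ⟨n / 4, by omega⟩
      have hform' : ∀ l k : ℕ, n' ≠ (4 : ℤ) ^ l * (8 * (k : ℤ) + 7) := by
        intro l k hcon
        apply hform (l + 1) k
        rw [hn', hcon, pow_succ]
        ring
      obtain ⟨u, v, w, huvw⟩ := ih n' (by omega) (by omega) hform'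
      exact ⟨2 * u, 2 * v, 2 * w, by rw [hn']; linarith [huvw]⟩
    · exact caseA n hn1 h
    · exact caseC n hn1 h
    · exact caseB n hn1 h
    · exfalso
      apply hform 0 ((n - 7) / 8).toNat
      have : (((n - 7) / 8).toNat : ℤ) = (n - 7) / 8 := by omega
      rw [pow_zero, one_mul, this]
      omega

abbrev G (β μ ν ω : ZMod 7) : Prop :=
  β - 2*μ - 2*ν - 4*ω = 0 ∧ β + 2*μ + 4*ν - 2*ω = 0 ∧
    β - 4*μ + 2*ν + 2*ω = 0 ∧ β + μ - ν + ω = 0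

instance instDecG (β μ ν ω : ZMod 7) : Decidable (G β μ ν ω) :=
  inferInstanceAs (Decidable (_ ∧ _ ∧ _ ∧ _))

set_option maxRecDepth 4000 in
theorem z7 : ∀ β μ ν ω : ZMod 7, β^2 + 4*(μ^2+ν^2+ω^2) = 0 →
    (G β μ ν ω ∨
    G β μ ν (-ω) ∨
    G β μ (-ν) ω ∨
    G β μ (-ν) (-ω) ∨
    G β (-μ) ν ω ∨
    G β (-μ) ν (-ω) ∨
    G β (-μ) (-ν) ω ∨
    G β (-μ) (-ν) (-ω) ∨
    G β μ ω ν ∨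
    G β μ ω (-ν) ∨
    G β μ (-ω) ν ∨
    G β μ (-ω) (-ν) ∨
    G β (-μ) ω ν ∨
    G β (-μ) ω (-ν) ∨
    G β (-μ) (-ω) ν ∨
    G β (-μ) (-ω) (-ν) ∨
    G β ν μ ω ∨
    G β ν μ (-ω) ∨
    G β ν (-μ) ω ∨
    G β ν (-μ) (-ω) ∨
    G β (-ν) μ ω ∨
    G β (-ν) μ (-ω) ∨
    G β (-ν) (-μ) ω ∨
    G β (-ν) (-μ) (-ω) ∨
    G β ν ω μ ∨
    G β ν ω (-μ) ∨
    G β ν (-ω) μ ∨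
    G β ν (-ω) (-μ) ∨
    G β (-ν) ω μ ∨
    G β (-ν) ω (-μ) ∨
    G β (-ν) (-ω) μ ∨
    G β (-ν) (-ω) (-μ) ∨
    G β ω μ ν ∨
    G β ω μ (-ν) ∨
    G β ω (-μ) ν ∨
    G β ω (-μ) (-ν) ∨
    G β (-ω) μ ν ∨
    G β (-ω) μ (-ν) ∨
    G β (-ω) (-μ) ν ∨
    G β (-ω) (-μ) (-ν) ∨
    G β ω ν μ ∨
    G β ω ν (-μ) ∨
    G β ω (-ν) μ ∨
    G β ω (-ν) (-μ) ∨
    G β (-ω) ν μ ∨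
    G β (-ω) ν (-μ) ∨
    G β (-ω) (-ν) μ ∨
    G β (-ω) (-ν) (-μ)) := by decide

private theorem mk_sel {b u v w u' v' w' : ℤ}
    (hsq : u'^2+v'^2+w'^2 = u^2+v^2+w^2)
    (hpar : (2:ℤ) ∣ (u'+v'+w') - (u+v+w))
    (h1 : ((b - 2*u' - 2*v' - 4*w' : ℤ) : ZMod 7) = 0)
    (h2 : ((b + 2*u' + 4*v' - 2*w' : ℤ) : ZMod 7) = 0)
    (h3 : ((b - 4*u' + 2*v' + 2*w' : ℤ) : ZMod 7) = 0)
    (h4 : ((b + u' - v' + w' : ℤ) : ZMod 7) = 0) :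
    ∃ a₁ a₂ a₃ : ℤ, a₁^2+a₂^2+a₃^2 = u^2+v^2+w^2 ∧ (2:ℤ) ∣ (a₁+a₂+a₃) - (u+v+w) ∧
      (7:ℤ) ∣ b - 2*a₁ - 2*a₂ - 4*a₃ ∧ (7:ℤ) ∣ b + 2*a₁ + 4*a₂ - 2*a₃ ∧
      (7:ℤ) ∣ b - 4*a₁ + 2*a₂ + 2*a₃ ∧ (7:ℤ) ∣ b + a₁ - a₂ + a₃ := by
  refine ⟨u', v', w', hsq, hpar, ?_, ?_, ?_, ?_⟩ <;>
    [skip; skip; skip; skip] <;>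
    first
    | exact_mod_cast (ZMod.intCast_zmod_eq_zero_iff_dvd _ 7).mp h1
    | exact_mod_cast (ZMod.intCast_zmod_eq_zero_iff_dvd _ 7).mp h2
    | exact_mod_cast (ZMod.intCast_zmod_eq_zero_iff_dvd _ 7).mp h3
    | exact_mod_cast (ZMod.intCast_zmod_eq_zero_iff_dvd _ 7).mp h4

theorem select (b u v w : ℤ) (h7 : (7:ℤ) ∣ b^2 + 4*(u^2+v^2+w^2)) :
    ∃ a₁ a₂ a₃ : ℤ, a₁^2+a₂^2+a₃^2 = u^2+v^2+w^2 ∧ (2:ℤ) ∣ (a₁+a₂+a₃) - (u+v+w) ∧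
      (7:ℤ) ∣ b - 2*a₁ - 2*a₂ - 4*a₃ ∧ (7:ℤ) ∣ b + 2*a₁ + 4*a₂ - 2*a₃ ∧
      (7:ℤ) ∣ b - 4*a₁ + 2*a₂ + 2*a₃ ∧ (7:ℤ) ∣ b + a₁ - a₂ + a₃ := by
  have h0 : ((b : ZMod 7))^2 + 4*(((u : ZMod 7))^2 + ((v : ZMod 7))^2 + ((w : ZMod 7))^2) = 0 := by
    have hz : ((b^2 + 4*(u^2+v^2+w^2) : ℤ) : ZMod 7) = 0 := by
      rw [ZMod.intCast_zmod_eq_zero_iff_dvd]; exact_mod_cast h7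
    push_cast at hz
    linear_combination hz

  rcases z7 (b : ZMod 7) (u : ZMod 7) (v : ZMod 7) (w : ZMod 7) h0 with
    h|h|h|h|h|h|h|h|h|h|h|h|h|h|h|h|h|h|h|h|h|h|h|h|h|h|h|h|h|h|h|h|h|h|h|h|h|h|h|h|h|h|h|h|h|h|h|h
  · exact mk_sel (u' := u) (v' := v) (w' := w) (by ring) (by omega)
      (by push_cast; linear_combination h.1) (by push_cast; linear_combination h.2.1)
      (by push_cast; linear_combination h.2.2.1) (by push_cast; linear_combination h.2.2.2)
  · exact mk_sel (u' := u) (v' := v) (w' := (-w)) (by ring) (by omega)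
      (by push_cast; linear_combination h.1) (by push_cast; linear_combination h.2.1)
      (by push_cast; linear_combination h.2.2.1) (by push_cast; linear_combination h.2.2.2)
  · exact mk_sel (u' := u) (v' := (-v)) (w' := w) (by ring) (by omega)
      (by push_cast; linear_combination h.1) (by push_cast; linear_combination h.2.1)
      (by push_cast; linear_combination h.2.2.1) (by push_cast; linear_combination h.2.2.2)
  · exact mk_sel (u' := u) (v' := (-v)) (w' := (-w)) (by ring) (by omega)
      (by push_cast; linear_combination h.1) (by push_cast; linear_combination h.2.1)
      (by push_cast; linear_combination h.2.2.1) (by push_cast; linear_combination h.2.2.2)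
  · exact mk_sel (u' := (-u)) (v' := v) (w' := w) (by ring) (by omega)
      (by push_cast; linear_combination h.1) (by push_cast; linear_combination h.2.1)
      (by push_cast; linear_combination h.2.2.1) (by push_cast; linear_combination h.2.2.2)
  · exact mk_sel (u' := (-u)) (v' := v) (w' := (-w)) (by ring) (by omega)
      (by push_cast; linear_combination h.1) (by push_cast; linear_combination h.2.1)
      (by push_cast; linear_combination h.2.2.1) (by push_cast; linear_combination h.2.2.2)
  · exact mk_sel (u' := (-u)) (v' := (-v)) (w' := w) (by ring) (by omega)
      (by push_cast; linear_combination h.1) (by push_cast; linear_combination h.2.1)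
      (by push_cast; linear_combination h.2.2.1) (by push_cast; linear_combination h.2.2.2)
  · exact mk_sel (u' := (-u)) (v' := (-v)) (w' := (-w)) (by ring) (by omega)
      (by push_cast; linear_combination h.1) (by push_cast; linear_combination h.2.1)
      (by push_cast; linear_combination h.2.2.1) (by push_cast; linear_combination h.2.2.2)
  · exact mk_sel (u' := u) (v' := w) (w' := v) (by ring) (by omega)
      (by push_cast; linear_combination h.1) (by push_cast; linear_combination h.2.1)
      (by push_cast; linear_combination h.2.2.1) (by push_cast; linear_combination h.2.2.2)
  · exact mk_sel (u' := u) (v' := w) (w' := (-v)) (by ring) (by omega)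
      (by push_cast; linear_combination h.1) (by push_cast; linear_combination h.2.1)
      (by push_cast; linear_combination h.2.2.1) (by push_cast; linear_combination h.2.2.2)
  · exact mk_sel (u' := u) (v' := (-w)) (w' := v) (by ring) (by omega)
      (by push_cast; linear_combination h.1) (by push_cast; linear_combination h.2.1)
      (by push_cast; linear_combination h.2.2.1) (by push_cast; linear_combination h.2.2.2)
  · exact mk_sel (u' := u) (v' := (-w)) (w' := (-v)) (by ring) (by omega)
      (by push_cast; linear_combination h.1) (by push_cast; linear_combination h.2.1)
      (by push_cast; linear_combination h.2.2.1) (by push_cast; linear_combination h.2.2.2)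
  · exact mk_sel (u' := (-u)) (v' := w) (w' := v) (by ring) (by omega)
      (by push_cast; linear_combination h.1) (by push_cast; linear_combination h.2.1)
      (by push_cast; linear_combination h.2.2.1) (by push_cast; linear_combination h.2.2.2)
  · exact mk_sel (u' := (-u)) (v' := w) (w' := (-v)) (by ring) (by omega)
      (by push_cast; linear_combination h.1) (by push_cast; linear_combination h.2.1)
      (by push_cast; linear_combination h.2.2.1) (by push_cast; linear_combination h.2.2.2)
  · exact mk_sel (u' := (-u)) (v' := (-w)) (w' := v) (by ring) (by omega)
      (by push_cast; linear_combination h.1) (by push_cast; linear_combination h.2.1)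
      (by push_cast; linear_combination h.2.2.1) (by push_cast; linear_combination h.2.2.2)
  · exact mk_sel (u' := (-u)) (v' := (-w)) (w' := (-v)) (by ring) (by omega)
      (by push_cast; linear_combination h.1) (by push_cast; linear_combination h.2.1)
      (by push_cast; linear_combination h.2.2.1) (by push_cast; linear_combination h.2.2.2)
  · exact mk_sel (u' := v) (v' := u) (w' := w) (by ring) (by omega)
      (by push_cast; linear_combination h.1) (by push_cast; linear_combination h.2.1)
      (by push_cast; linear_combination h.2.2.1) (by push_cast; linear_combination h.2.2.2)
  · exact mk_sel (u' := v) (v' := u) (w' := (-w)) (by ring) (by omega)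
      (by push_cast; linear_combination h.1) (by push_cast; linear_combination h.2.1)
      (by push_cast; linear_combination h.2.2.1) (by push_cast; linear_combination h.2.2.2)
  · exact mk_sel (u' := v) (v' := (-u)) (w' := w) (by ring) (by omega)
      (by push_cast; linear_combination h.1) (by push_cast; linear_combination h.2.1)
      (by push_cast; linear_combination h.2.2.1) (by push_cast; linear_combination h.2.2.2)
  · exact mk_sel (u' := v) (v' := (-u)) (w' := (-w)) (by ring) (by omega)
      (by push_cast; linear_combination h.1) (by push_cast; linear_combination h.2.1)
      (by push_cast; linear_combination h.2.2.1) (by push_cast; linear_combination h.2.2.2)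
  · exact mk_sel (u' := (-v)) (v' := u) (w' := w) (by ring) (by omega)
      (by push_cast; linear_combination h.1) (by push_cast; linear_combination h.2.1)
      (by push_cast; linear_combination h.2.2.1) (by push_cast; linear_combination h.2.2.2)
  · exact mk_sel (u' := (-v)) (v' := u) (w' := (-w)) (by ring) (by omega)
      (by push_cast; linear_combination h.1) (by push_cast; linear_combination h.2.1)
      (by push_cast; linear_combination h.2.2.1) (by push_cast; linear_combination h.2.2.2)
  · exact mk_sel (u' := (-v)) (v' := (-u)) (w' := w) (by ring) (by omega)
      (by push_cast; linear_combination h.1) (by push_cast; linear_combination h.2.1)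
      (by push_cast; linear_combination h.2.2.1) (by push_cast; linear_combination h.2.2.2)
  · exact mk_sel (u' := (-v)) (v' := (-u)) (w' := (-w)) (by ring) (by omega)
      (by push_cast; linear_combination h.1) (by push_cast; linear_combination h.2.1)
      (by push_cast; linear_combination h.2.2.1) (by push_cast; linear_combination h.2.2.2)
  · exact mk_sel (u' := v) (v' := w) (w' := u) (by ring) (by omega)
      (by push_cast; linear_combination h.1) (by push_cast; linear_combination h.2.1)
      (by push_cast; linear_combination h.2.2.1) (by push_cast; linear_combination h.2.2.2)
  · exact mk_sel (u' := v) (v' := w) (w' := (-u)) (by ring) (by omega)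
      (by push_cast; linear_combination h.1) (by push_cast; linear_combination h.2.1)
      (by push_cast; linear_combination h.2.2.1) (by push_cast; linear_combination h.2.2.2)
  · exact mk_sel (u' := v) (v' := (-w)) (w' := u) (by ring) (by omega)
      (by push_cast; linear_combination h.1) (by push_cast; linear_combination h.2.1)
      (by push_cast; linear_combination h.2.2.1) (by push_cast; linear_combination h.2.2.2)
  · exact mk_sel (u' := v) (v' := (-w)) (w' := (-u)) (by ring) (by omega)
      (by push_cast; linear_combination h.1) (by push_cast; linear_combination h.2.1)
      (by push_cast; linear_combination h.2.2.1) (by push_cast; linear_combination h.2.2.2)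
  · exact mk_sel (u' := (-v)) (v' := w) (w' := u) (by ring) (by omega)
      (by push_cast; linear_combination h.1) (by push_cast; linear_combination h.2.1)
      (by push_cast; linear_combination h.2.2.1) (by push_cast; linear_combination h.2.2.2)
  · exact mk_sel (u' := (-v)) (v' := w) (w' := (-u)) (by ring) (by omega)
      (by push_cast; linear_combination h.1) (by push_cast; linear_combination h.2.1)
      (by push_cast; linear_combination h.2.2.1) (by push_cast; linear_combination h.2.2.2)
  · exact mk_sel (u' := (-v)) (v' := (-w)) (w' := u) (by ring) (by omega)
      (by push_cast; linear_combination h.1) (by push_cast; linear_combination h.2.1)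
      (by push_cast; linear_combination h.2.2.1) (by push_cast; linear_combination h.2.2.2)
  · exact mk_sel (u' := (-v)) (v' := (-w)) (w' := (-u)) (by ring) (by omega)
      (by push_cast; linear_combination h.1) (by push_cast; linear_combination h.2.1)
      (by push_cast; linear_combination h.2.2.1) (by push_cast; linear_combination h.2.2.2)
  · exact mk_sel (u' := w) (v' := u) (w' := v) (by ring) (by omega)
      (by push_cast; linear_combination h.1) (by push_cast; linear_combination h.2.1)
      (by push_cast; linear_combination h.2.2.1) (by push_cast; linear_combination h.2.2.2)
  · exact mk_sel (u' := w) (v' := u) (w' := (-v)) (by ring) (by omega)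
      (by push_cast; linear_combination h.1) (by push_cast; linear_combination h.2.1)
      (by push_cast; linear_combination h.2.2.1) (by push_cast; linear_combination h.2.2.2)
  · exact mk_sel (u' := w) (v' := (-u)) (w' := v) (by ring) (by omega)
      (by push_cast; linear_combination h.1) (by push_cast; linear_combination h.2.1)
      (by push_cast; linear_combination h.2.2.1) (by push_cast; linear_combination h.2.2.2)
  · exact mk_sel (u' := w) (v' := (-u)) (w' := (-v)) (by ring) (by omega)
      (by push_cast; linear_combination h.1) (by push_cast; linear_combination h.2.1)
      (by push_cast; linear_combination h.2.2.1) (by push_cast; linear_combination h.2.2.2)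
  · exact mk_sel (u' := (-w)) (v' := u) (w' := v) (by ring) (by omega)
      (by push_cast; linear_combination h.1) (by push_cast; linear_combination h.2.1)
      (by push_cast; linear_combination h.2.2.1) (by push_cast; linear_combination h.2.2.2)
  · exact mk_sel (u' := (-w)) (v' := u) (w' := (-v)) (by ring) (by omega)
      (by push_cast; linear_combination h.1) (by push_cast; linear_combination h.2.1)
      (by push_cast; linear_combination h.2.2.1) (by push_cast; linear_combination h.2.2.2)
  · exact mk_sel (u' := (-w)) (v' := (-u)) (w' := v) (by ring) (by omega)
      (by push_cast; linear_combination h.1) (by push_cast; linear_combination h.2.1)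
      (by push_cast; linear_combination h.2.2.1) (by push_cast; linear_combination h.2.2.2)
  · exact mk_sel (u' := (-w)) (v' := (-u)) (w' := (-v)) (by ring) (by omega)
      (by push_cast; linear_combination h.1) (by push_cast; linear_combination h.2.1)
      (by push_cast; linear_combination h.2.2.1) (by push_cast; linear_combination h.2.2.2)
  · exact mk_sel (u' := w) (v' := v) (w' := u) (by ring) (by omega)
      (by push_cast; linear_combination h.1) (by push_cast; linear_combination h.2.1)
      (by push_cast; linear_combination h.2.2.1) (by push_cast; linear_combination h.2.2.2)
  · exact mk_sel (u' := w) (v' := v) (w' := (-u)) (by ring) (by omega)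
      (by push_cast; linear_combination h.1) (by push_cast; linear_combination h.2.1)
      (by push_cast; linear_combination h.2.2.1) (by push_cast; linear_combination h.2.2.2)
  · exact mk_sel (u' := w) (v' := (-v)) (w' := u) (by ring) (by omega)
      (by push_cast; linear_combination h.1) (by push_cast; linear_combination h.2.1)
      (by push_cast; linear_combination h.2.2.1) (by push_cast; linear_combination h.2.2.2)
  · exact mk_sel (u' := w) (v' := (-v)) (w' := (-u)) (by ring) (by omega)
      (by push_cast; linear_combination h.1) (by push_cast; linear_combination h.2.1)
      (by push_cast; linear_combination h.2.2.1) (by push_cast; linear_combination h.2.2.2)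
  · exact mk_sel (u' := (-w)) (v' := v) (w' := u) (by ring) (by omega)
      (by push_cast; linear_combination h.1) (by push_cast; linear_combination h.2.1)
      (by push_cast; linear_combination h.2.2.1) (by push_cast; linear_combination h.2.2.2)
  · exact mk_sel (u' := (-w)) (v' := v) (w' := (-u)) (by ring) (by omega)
      (by push_cast; linear_combination h.1) (by push_cast; linear_combination h.2.1)
      (by push_cast; linear_combination h.2.2.1) (by push_cast; linear_combination h.2.2.2)
  · exact mk_sel (u' := (-w)) (v' := (-v)) (w' := u) (by ring) (by omega)
      (by push_cast; linear_combination h.1) (by push_cast; linear_combination h.2.1)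
      (by push_cast; linear_combination h.2.2.1) (by push_cast; linear_combination h.2.2.2)
  · exact mk_sel (u' := (-w)) (v' := (-v)) (w' := (-u)) (by ring) (by omega)
      (by push_cast; linear_combination h.1) (by push_cast; linear_combination h.2.1)
      (by push_cast; linear_combination h.2.2.1) (by push_cast; linear_combination h.2.2.2)

end Rep1114

/-- The generalized `m`-gonal number `P_m(x) = ((m-2)x² - (m-4)x)/2`. -/
def polygonal (m x : ℤ) : ℤ := ((m - 2) * x ^ 2 - (m - 4) * x) / 2

set_option maxHeartbeats 2000000 in
theorem rep_1114 (m : ℤ) (hm : 3 ≤ m) (A B : ℤ) (hA : 0 ≤ A)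
    (hd : 0 ≤ 14 * A + 7 * B - B ^ 2)
    (hform : ∀ l k : ℕ, 14 * A + 7 * B - B ^ 2 ≠ (4 : ℤ) ^ l * (8 * (k : ℤ) + 7)) :
    ∃ x₁ x₂ x₃ x₄ : ℤ,
      polygonal m x₁ + polygonal m x₂ + polygonal m x₃ + 4 * polygonal m x₄ =
        A * (m - 2) + B := by
  obtain ⟨u, v, w, hn⟩ :=
    Rep1114.three_sq (14 * A + 7 * B - B ^ 2).toNat (14 * A + 7 * B - B ^ 2) le_rfl hd hform
  have h7 : (7 : ℤ) ∣ (2 * B - 7) ^ 2 + 4 * (u ^ 2 + v ^ 2 + w ^ 2) := by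
    rw [hn]; exact ⟨8 * A + 7, by ring⟩
  obtain ⟨a₁, a₂, a₃, hsq, hpar, d1, d2, d3, d4⟩ := Rep1114.select (2 * B - 7) u v w h7
  obtain ⟨y₁, hy₁⟩ := d1
  obtain ⟨y₂, hy₂⟩ := d2
  obtain ⟨y₃, hy₃⟩ := d3
  obtain ⟨y₄, hy₄⟩ := d4
  -- quadratic relation
  have hNsum : y₁ ^ 2 + y₂ ^ 2 + y₃ ^ 2 + 4 * y₄ ^ 2 = 8 * A + 7 := by
    have e1 : (2 * B - 7 - 2 * a₁ - 2 * a₂ - 4 * a₃) ^ 2 = 49 * y₁ ^ 2 := by rw [hy₁]; ring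
    have e2 : (2 * B - 7 + 2 * a₁ + 4 * a₂ - 2 * a₃) ^ 2 = 49 * y₂ ^ 2 := by rw [hy₂]; ring
    have e3 : (2 * B - 7 - 4 * a₁ + 2 * a₂ + 2 * a₃) ^ 2 = 49 * y₃ ^ 2 := by rw [hy₃]; ring
    have e4 : (2 * B - 7 + a₁ - a₂ + a₃) ^ 2 = 49 * y₄ ^ 2 := by rw [hy₄]; ring
    have emain : (2 * B - 7 - 2 * a₁ - 2 * a₂ - 4 * a₃) ^ 2 +
        (2 * B - 7 + 2 * a₁ + 4 * a₂ - 2 * a₃) ^ 2 +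
        (2 * B - 7 - 4 * a₁ + 2 * a₂ + 2 * a₃) ^ 2 + 4 * (2 * B - 7 + a₁ - a₂ + a₃) ^ 2 =
        7 * ((2 * B - 7) ^ 2 + 4 * (a₁ ^ 2 + a₂ ^ 2 + a₃ ^ 2)) := by ring
    have h49 : 49 * (y₁ ^ 2 + y₂ ^ 2 + y₃ ^ 2 + 4 * y₄ ^ 2) = 49 * (8 * A + 7) := by
      linear_combination (-1 : ℤ) * e1 - e2 - e3 - 4 * e4 + emain + 28 * hsq + 28 * hn
    exact mul_left_cancel₀ (by norm_num : (49 : ℤ) ≠ 0) h49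
  -- linear relation
  have hLsum : y₁ + y₂ + y₃ + 4 * y₄ = 2 * B - 7 := by
    clear * - hy₁ hy₂ hy₃ hy₄
    omega
  -- parity facts
  obtain ⟨cB, hcB⟩ := Int.even_mul_succ_self B
  obtain ⟨cu, hcu⟩ := Int.even_mul_succ_self u
  obtain ⟨cv, hcv⟩ := Int.even_mul_succ_self v
  obtain ⟨cw, hcw⟩ := Int.even_mul_succ_self w
  have k1 : (2:ℤ) ∣ (u + v + w) - (u^2 + v^2 + w^2) :=
    ⟨u + v + w - cu - cv - cw, by linear_combination -hcu - hcv - hcw⟩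
  have k2 : (2:ℤ) ∣ (u^2 + v^2 + w^2) - (B^2 + B) := ⟨7*A + 3*B - B^2, by linear_combination hn⟩
  have kB : (2:ℤ) ∣ B^2 + B := ⟨cB, by linear_combination hcB⟩
  have huvw : (2:ℤ) ∣ u + v + w := by clear * - k1 k2 kB; omega
  have ha3 : (2:ℤ) ∣ a₁ + a₂ + a₃ := by clear * - hpar huvw; omega
  have hodd1 : y₁ % 2 = 1 := by clear * - hy₁; omega
  have hodd2 : y₂ % 2 = 1 := by clear * - hy₂; omega
  have hodd3 : y₃ % 2 = 1 := by clear * - hy₃; omega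
  have hodd4 : y₄ % 2 = 1 := by clear * - hy₄ ha3; omega
  -- pass to x-variables
  obtain ⟨x₁, hx₁⟩ : ∃ x : ℤ, y₁ = 2 * x - 1 := ⟨(y₁ + 1) / 2, by clear * - hodd1; omega⟩
  obtain ⟨x₂, hx₂⟩ : ∃ x : ℤ, y₂ = 2 * x - 1 := ⟨(y₂ + 1) / 2, by clear * - hodd2; omega⟩
  obtain ⟨x₃, hx₃⟩ : ∃ x : ℤ, y₃ = 2 * x - 1 := ⟨(y₃ + 1) / 2, by clear * - hodd3; omega⟩
  obtain ⟨x₄, hx₄⟩ : ∃ x : ℤ, y₄ = 2 * x - 1 := ⟨(y₄ + 1) / 2, by clear * - hodd4; omega⟩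
  rw [hx₁, hx₂, hx₃, hx₄] at hNsum hLsum
  have hpoly : ∀ x : ℤ, polygonal m x * 2 = (m - 2) * x ^ 2 - (m - 4) * x := by
    intro x
    have hx2 : (2 : ℤ) ∣ (m - 2) * x ^ 2 - (m - 4) * x := by
      obtain ⟨c, hc⟩ := Int.even_mul_succ_self x
      exact ⟨(m - 2) * c - (m - 3) * x, by linear_combination (m - 2) * hc⟩
    exact Int.ediv_mul_cancel hx2
  refine ⟨x₁, x₂, x₃, x₄, ?_⟩
  have e₁ := hpoly x₁
  have e₂ := hpoly x₂
  have e₃ := hpoly x₃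
  have e₄ := hpoly x₄
  have final8 : (polygonal m x₁ + polygonal m x₂ + polygonal m x₃ + 4 * polygonal m x₄) * 8 =
      (A * (m - 2) + B) * 8 := by
    linear_combination 4 * e₁ + 4 * e₂ + 4 * e₃ + 16 * e₄ + (m - 2) * hNsum + 4 * hLsum
  exact mul_right_cancel₀ (by norm_num : (8 : ℤ) ≠ 0) final8
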